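/- Let λ : Fˣ → kˣ be a nontrivial group homomorphism, let n ≥ 1, and let u₁, …, u_n ∈ Fˣ be pairwise distinct. Then the set of tuples x = (x₁, …, x_n) ∈ (Fˣ)ⁿ such that xᵢ + uⱼ ≠ 0 for all i, j and the n×n matrix whose (i,j) entry is λ(xᵢ + uⱼ) has nonzero determinant, is infinite. -/

import Mathlib

open Matrix MonoidAlgebra
open scoped Classical

noncomputable section

variable (p : ℕ) [Fact p.Prime]

abbrev Fbar : Type := AlgebraicClosure (ZMod p)
abbrev SL2 : Type := Matrix.SpecialLinearGroup (Fin 2) (Fbar p)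

def Tgrp : Subgroup (SL2 p) where
  carrier := {g | g.1 0 1 = 0 ∧ g.1 1 0 = 0}
  one_mem' := by simp
  mul_mem' := by
    rintro a b ⟨ha1, ha2⟩ ⟨hb1, hb2⟩
    constructor <;>
      simp [Matrix.mul_apply, Fin.sum_univ_succ, ha1, ha2, hb1, hb2]
  inv_mem' := by
    rintro a ⟨ha1, ha2⟩
    constructor <;>
      simp [Matrix.SpecialLinearGroup.coe_inv, Matrix.adjugate_fin_two, ha1, ha2]

def Ugrp : Subgroup (SL2 p) where
  carrier := {g | g.1 1 0 = 0 ∧ g.1 0 0 = 1 ∧ g.1 1 1 = 1}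
  one_mem' := by simp
  mul_mem' := by
    rintro a b ⟨ha1, ha2, ha3⟩ ⟨hb1, hb2, hb3⟩
    refine ⟨?_, ?_, ?_⟩ <;>
      simp [Matrix.mul_apply, Fin.sum_univ_succ, ha1, ha2, ha3, hb1, hb2, hb3]
  inv_mem' := by
    rintro a ⟨ha1, ha2, ha3⟩
    refine ⟨?_, ?_, ?_⟩ <;>
      simp [Matrix.SpecialLinearGroup.coe_inv, Matrix.adjugate_fin_two, ha1, ha2, ha3]

def Bgrp : Subgroup (SL2 p) where
  carrier := {g | g.1 1 0 = 0}
  one_mem' := by simp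
  mul_mem' := by
    intro a b ha hb
    simp only [Set.mem_setOf_eq] at *
    simp [Matrix.mul_apply, Fin.sum_univ_succ, ha, hb]
  inv_mem' := by
    intro a ha
    simp only [Set.mem_setOf_eq] at *
    simp [Matrix.SpecialLinearGroup.coe_inv, Matrix.adjugate_fin_two, ha]

def Ngrp : Subgroup (SL2 p) := Subgroup.normalizer ((Tgrp p : Set (SL2 p)))

def eps (x : Fbar p) : SL2 p :=
  ⟨!![1, x; 0, 1], by simp [Matrix.det_fin_two_of]⟩

def sdot : SL2 p :=
  ⟨!![0, 1; -1, 0], by simp [Matrix.det_fin_two_of]⟩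

lemma mem_Tgrp_iff {g : SL2 p} : g ∈ Tgrp p ↔ g.1 0 1 = 0 ∧ g.1 1 0 = 0 := Iff.rfl
lemma mem_Bgrp_iff {g : SL2 p} : g ∈ Bgrp p ↔ g.1 1 0 = 0 := Iff.rfl

/-- The projection `B → T` killing the unipotent radical `U`,
sending an upper triangular matrix to its diagonal part. -/
def diagHom : Bgrp p →* Tgrp p where
  toFun b :=
    ⟨⟨!![b.1.1 0 0, 0; 0, b.1.1 1 1], by
        have hd : b.1.1.det = 1 := b.1.2
        rw [Matrix.det_fin_two] at hd
        have h10 : b.1.1 1 0 = 0 := b.2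
        rw [h10, mul_zero, sub_zero] at hd
        simpa [Matrix.det_fin_two_of] using hd⟩,
     by constructor <;> simp⟩
  map_one' := by
    apply Subtype.ext
    apply Subtype.ext
    simp [Matrix.one_fin_two]
  map_mul' := by
    intro a b
    apply Subtype.ext
    apply Subtype.ext
    have ha : a.1.1 1 0 = 0 := a.2
    have hb : b.1.1 1 0 = 0 := b.2
    show !![((a * b : Bgrp p) : SL2 p).1 0 0, 0; 0, ((a * b : Bgrp p) : SL2 p).1 1 1] =
      !![a.1.1 0 0, 0; 0, a.1.1 1 1] * !![b.1.1 0 0, 0; 0, b.1.1 1 1]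
    ext i j
    fin_cases i <;> fin_cases j <;>
      simp [Matrix.SpecialLinearGroup.coe_mul, Matrix.mul_apply, Fin.sum_univ_succ, ha, hb]

/-- Conjugation by `ṡ` as an automorphism of `T`:  `t ↦ ṡ⁻¹ t ṡ`. -/
def sConj : Tgrp p →* Tgrp p where
  toFun t :=
    ⟨(sdot p)⁻¹ * (t : SL2 p) * sdot p, by
      have h1 : (t : SL2 p).1 0 1 = 0 := t.2.1
      have h2 : (t : SL2 p).1 1 0 = 0 := t.2.2
      show (Matrix.adjugate (sdot p).1 * (t : SL2 p).1 * (sdot p).1) 0 1 = 0 ∧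
        (Matrix.adjugate (sdot p).1 * (t : SL2 p).1 * (sdot p).1) 1 0 = 0
      constructor <;>
        simp [sdot, Matrix.SpecialLinearGroup.coe_inv, Matrix.adjugate_fin_two,
          Matrix.mul_apply, Matrix.vecMul, dotProduct, Fin.sum_univ_succ, h1, h2]⟩
  map_one' := by
    apply Subtype.ext
    simp
  map_mul' := by
    intro a b
    apply Subtype.ext
    simp only [Subgroup.coe_mul]
    group

variable (k : Type*) [Field k] [IsAlgClosed k] [CharZero k]

/-- The group algebra `kG`. -/
abbrev GA := MonoidAlgebra k (SL2 p)

/-- The submodule of relations defining `kG ⊗_{kH} k_χ`. -/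
def indRel (H : Subgroup (SL2 p)) (χ : H → k) : Submodule (GA p k) (GA p k) :=
  Submodule.span (GA p k)
    {x | ∃ (g : SL2 p) (h : H),
      x = MonoidAlgebra.single (g * (h : SL2 p)) 1 - χ h • MonoidAlgebra.single g 1}

/-- The induced module `kG ⊗_{kH} k_χ`, realized as a quotient of `kG`. -/
abbrev IndMod (H : Subgroup (SL2 p)) (χ : H → k) : Type _ := GA p k ⧸ indRel p k H χ

/-- The canonical image of `g ⊗ 1` in `kG ⊗_{kH} k_χ`. -/
def indMk (H : Subgroup (SL2 p)) (χ : H → k) (g : SL2 p) : IndMod p k H χ :=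
  Submodule.Quotient.mk (MonoidAlgebra.single g 1)

/-- The character value function `B → k` attached to a character `θ` of `T`,
via the projection `B → T`. -/
def charB (θ : Tgrp p →* kˣ) : Bgrp p → k := fun b => θ (diagHom p b)

/-- `M(θ) = kG ⊗_{kB} k_θ`. -/
abbrev Mθ (θ : Tgrp p →* kˣ) : Type _ := IndMod p k (Bgrp p) (charB p k θ)

/-- The trivial `kG`-module `k_tr`. -/
abbrev Ktriv : Type _ := (Representation.trivial k (G := SL2 p) (V := k)).asModule

/-- The permutation module `k[G/H]`. -/
abbrev PermMod (H : Subgroup (SL2 p)) : Type _ :=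
  (Representation.ofMulAction k (SL2 p) (SL2 p ⧸ H)).asModule

/-- The augmentation (sum of coefficients) on `k[G/H]`. -/
def aug (H : Subgroup (SL2 p)) (ξ : PermMod p k H) : k :=
  ((Representation.ofMulAction k (SL2 p) (SL2 p ⧸ H)).asModuleEquiv ξ).coeff.sum fun _ c => c


/-- Extension of a homomorphism `λ : Fˣ → kˣ` to `F`, by `0` at `0`. -/
def lamExt (lam : (Fbar p)ˣ →* kˣ) : Fbar p → k := fun y =>
  if h : y = 0 then 0 else (lam (Units.mk0 y h) : k)

section Aux3
variable (lam : (Fbar p)ˣ →* kˣ)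

lemma lamExt_zero : lamExt p k lam 0 = 0 := by simp [lamExt]

lemma lamExt_of_ne {y : Fbar p} (h : y ≠ 0) : lamExt p k lam y = lam (Units.mk0 y h) := by
  simp [lamExt, h]

lemma lamExt_ne_zero {y : Fbar p} (h : y ≠ 0) : lamExt p k lam y ≠ 0 := by
  rw [lamExt_of_ne p k lam h]; exact Units.ne_zero _

lemma lamExt_one : lamExt p k lam 1 = 1 := by
  rw [lamExt_of_ne p k lam one_ne_zero]
  norm_num

lemma lamExt_coe_units (v : (Fbar p)ˣ) : lamExt p k lam v = lam v := by
  rw [lamExt_of_ne p k lam v.ne_zero]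
  congr 2
  exact Units.ext rfl

lemma lamExt_mul (a b : Fbar p) :
    lamExt p k lam (a * b) = lamExt p k lam a * lamExt p k lam b := by
  rcases eq_or_ne a 0 with rfl | ha
  · simp [lamExt_zero]
  rcases eq_or_ne b 0 with rfl | hb
  · simp [lamExt_zero]
  rw [lamExt_of_ne p k lam ha, lamExt_of_ne p k lam hb,
    lamExt_of_ne p k lam (mul_ne_zero ha hb)]
  have : Units.mk0 (a * b) (mul_ne_zero ha hb) = Units.mk0 a ha * Units.mk0 b hb :=
    Units.ext rfl
  rw [this, _root_.map_mul, Units.val_mul]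

lemma lamExt_inv_mul (a b : Fbar p) :
    lamExt p k lam a * lamExt p k lam⁻¹ b = lamExt p k lam (a / b) := by
  rcases eq_or_ne a 0 with rfl | ha
  · simp [lamExt_zero]
  rcases eq_or_ne b 0 with rfl | hb
  · simp [lamExt, ha]
  rw [lamExt_of_ne p k lam ha, lamExt_of_ne p k lam⁻¹ hb,
    lamExt_of_ne p k lam (div_ne_zero ha hb)]
  have : Units.mk0 (a / b) (div_ne_zero ha hb) = Units.mk0 a ha * (Units.mk0 b hb)⁻¹ :=
    Units.ext rfl
  rw [this, _root_.map_mul, _root_.map_inv, Units.val_mul, MonoidHom.inv_apply]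

open IntermediateField in
lemma sum_lamExt_eq_zero (K : IntermediateField (ZMod p) (Fbar p)) [Fintype K]
    (w : Fbar p) (hwK : w ∈ K) (hw0 : w ≠ 0) (hw1 : lamExt p k lam w ≠ 1) :
    ∑ y : K, lamExt p k lam y = 0 := by
  set S := ∑ y : K, lamExt p k lam (y : Fbar p) with hS
  have hwK0 : (⟨w, hwK⟩ : K) ≠ 0 := fun h => hw0 (congrArg Subtype.val h)
  have key : lamExt p k lam w * S = S := by
    rw [hS, Finset.mul_sum]
    have h1 : ∀ y : K, lamExt p k lam w * lamExt p k lam y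
        = lamExt p k lam ((⟨w, hwK⟩ : K) * y : K) := by
      intro y
      rw [← lamExt_mul]
      norm_num
    simp_rw [h1]
    exact Fintype.sum_equiv (Equiv.mulLeft₀ (⟨w, hwK⟩ : K) hwK0)
      (fun y => lamExt p k lam ((⟨w, hwK⟩ : K) * y : K)) (fun y => lamExt p k lam y)
      (fun y => rfl)
  have : (lamExt p k lam w - 1) * S = 0 := by rw [sub_mul, one_mul, key, sub_self]
  rcases mul_eq_zero.1 this with h | h
  · exact absurd (sub_eq_zero.1 h) hw1
  · exact h
open IntermediateField in
lemma orth_diag (K : IntermediateField (ZMod p) (Fbar p)) [Fintype K]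
    (u : Fbar p) (hu : u ∈ K) :
    ∑ x : K, lamExt p k lam ((x : Fbar p) + u) * lamExt p k lam⁻¹ ((x : Fbar p) + u)
      = (Fintype.card K : k) - 1 := by
  have hterm : ∀ x : K, lamExt p k lam ((x : Fbar p) + u) * lamExt p k lam⁻¹ ((x : Fbar p) + u)
      = if x = (⟨-u, K.neg_mem hu⟩ : K) then 0 else 1 := by
    intro x
    rcases eq_or_ne ((x : Fbar p) + u) 0 with h0 | h0
    · have : x = (⟨-u, K.neg_mem hu⟩ : K) := Subtype.ext (by
        have := eq_neg_of_add_eq_zero_left h0; exact this)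
      rw [if_pos this, h0, lamExt_zero, zero_mul]
    · have hx : ¬ x = (⟨-u, K.neg_mem hu⟩ : K) := by
        intro h
        apply h0
        rw [h]
        simp
      rw [if_neg hx, lamExt_inv_mul, div_self h0, lamExt_one]
  simp_rw [hterm]
  have : ∀ x : K, (if x = (⟨-u, K.neg_mem hu⟩ : K) then (0:k) else 1)
      = 1 - (if x = (⟨-u, K.neg_mem hu⟩ : K) then (1:k) else 0) := by
    intro x; split <;> ring
  simp_rw [this]
  rw [Finset.sum_sub_distrib, Finset.sum_const, Finset.sum_ite_eq' Finset.univ _ (fun _ => (1:k)),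
    if_pos (Finset.mem_univ _)]
  simp [Finset.card_univ]

open IntermediateField in
lemma orth_off (K : IntermediateField (ZMod p) (Fbar p)) [Fintype K]
    (w : Fbar p) (hwK : w ∈ K) (hw0 : w ≠ 0) (hw1 : lamExt p k lam w ≠ 1)
    (u u' : Fbar p) (hu : u ∈ K) (hu' : u' ∈ K) (huu : u ≠ u') :
    ∑ x : K, lamExt p k lam ((x : Fbar p) + u) * lamExt p k lam⁻¹ ((x : Fbar p) + u')
      = -1 := by
  set uK : K := ⟨u, hu⟩ with huK
  set u'K : K := ⟨u', hu'⟩ with hu'K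
  have hne : uK ≠ u'K := fun h => huu (congrArg Subtype.val h)
  have hnesub : uK - u'K ≠ 0 := sub_ne_zero.2 hne
  have hterm : ∀ x : K,
      lamExt p k lam ((x : Fbar p) + u) * lamExt p k lam⁻¹ ((x : Fbar p) + u')
        = lamExt p k lam ((((x + uK) / (x + u'K)) : K) : Fbar p) := by
    intro x
    rw [lamExt_inv_mul]
    congr 1
  simp_rw [hterm]
  have hmem : (-u'K) ∈ (Finset.univ : Finset K) := Finset.mem_univ _
  rw [← Finset.add_sum_erase Finset.univ _ hmem]
  have hval0 : lamExt p k lam ((((-u'K + uK) / (-u'K + u'K)) : K) : Fbar p) = 0 := by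
    rw [neg_add_cancel, div_zero]
    exact lamExt_zero p k lam
  rw [hval0, zero_add]
  have hbij : ∑ x ∈ Finset.univ.erase (-u'K),
      lamExt p k lam ((((x + uK) / (x + u'K)) : K) : Fbar p)
      = ∑ y ∈ Finset.univ.erase (1 : K), lamExt p k lam ((y : K) : Fbar p) := by
    refine Finset.sum_bij' (fun x _ => (x + uK) / (x + u'K))
      (fun y _ => (uK - y * u'K) / (y - 1)) ?_ ?_ ?_ ?_ ?_
    · intro x hx
      have hden : x + u'K ≠ 0 := by
        intro h
        exact (Finset.mem_erase.1 hx).1 (eq_neg_of_add_eq_zero_left h)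
      refine Finset.mem_erase.2 ⟨?_, Finset.mem_univ _⟩
      intro h
      rw [div_eq_one_iff_eq hden] at h
      exact hne (by linear_combination h)
    · intro y hy
      have hden : y - 1 ≠ 0 := sub_ne_zero.2 (Finset.mem_erase.1 hy).1
      refine Finset.mem_erase.2 ⟨?_, Finset.mem_univ _⟩
      intro h
      rw [div_eq_iff hden] at h
      apply hne
      have : uK - y * u'K = -u'K * (y - 1) := h
      have h2 : uK = u'K := by linear_combination this
      exact h2
    · intro x hx
      have hden : x + u'K ≠ 0 := by
        intro h
        exact (Finset.mem_erase.1 hx).1 (eq_neg_of_add_eq_zero_left h)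
      have hne1 : (x + uK) / (x + u'K) - 1 ≠ 0 := by
        rw [sub_ne_zero]
        intro h
        rw [div_eq_one_iff_eq hden] at h
        exact hnesub (by linear_combination h)
      field_simp [hnesub]
      ring
    · intro y hy
      have hden : y - 1 ≠ 0 := sub_ne_zero.2 (Finset.mem_erase.1 hy).1
      have hden2 : (uK - y * u'K) / (y - 1) + u'K ≠ 0 := by
        rw [div_add' _ _ _ hden, div_ne_zero_iff]
        constructor
        · intro h
          exact hnesub (by linear_combination h)
        · exact hden
      field_simp [hnesub]
      linear_combination y * mul_inv_cancel₀ hnesub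
    · intro x hx
      rfl
  rw [hbij, Finset.sum_erase_eq_sub (Finset.mem_univ (1 : K)),
    sum_lamExt_eq_zero p k lam K w hwK hw0 hw1]
  have : ((1 : K) : Fbar p) = 1 := rfl
  rw [this, lamExt_one]
  ring

open IntermediateField in
/-- Key computation: for a finite subfield `K` containing everything relevant, the
"inner product" of `g` with the `i₀`-th conjugate character is `q * C i₀ - ∑ C`. -/
lemma key_sum {n : ℕ} (u : Fin n → (Fbar p)ˣ) (hu : Function.Injective u)
    (C : Fin n → k) (i₀ : Fin n)
    (K : IntermediateField (ZMod p) (Fbar p)) [Fintype K]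
    (w : Fbar p) (hwK : w ∈ K) (hw0 : w ≠ 0) (hw1 : lamExt p k lam w ≠ 1)
    (huK : ∀ j, ((u j : Fbar p)) ∈ K) :
    ∑ x : K, (∑ j, C j * lamExt p k lam ((x : Fbar p) + u j))
        * lamExt p k lam⁻¹ ((x : Fbar p) + u i₀)
      = (Fintype.card K : k) * C i₀ - ∑ j, C j := by
  have swap : ∑ x : K, (∑ j, C j * lamExt p k lam ((x : Fbar p) + u j))
        * lamExt p k lam⁻¹ ((x : Fbar p) + u i₀)
      = ∑ j, C j * ∑ x : K,
          lamExt p k lam ((x : Fbar p) + u j) * lamExt p k lam⁻¹ ((x : Fbar p) + u i₀) := by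
    simp_rw [Finset.sum_mul, mul_assoc]
    rw [Finset.sum_comm]
    simp_rw [← Finset.mul_sum]
  rw [swap]
  have hinner : ∀ j, (∑ x : K,
      lamExt p k lam ((x : Fbar p) + u j) * lamExt p k lam⁻¹ ((x : Fbar p) + u i₀))
      = if j = i₀ then (Fintype.card K : k) - 1 else -1 := by
    intro j
    by_cases hj : j = i₀
    · subst hj
      rw [if_pos rfl]
      exact orth_diag p k lam K _ (huK j)
    · rw [if_neg hj]
      refine orth_off p k lam K w hwK hw0 hw1 _ _ (huK j) (huK i₀) ?_
      intro h
      exact hj (hu (Units.ext h))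
  simp_rw [hinner]
  have hsplit : ∀ j, C j * (if j = i₀ then (Fintype.card K : k) - 1 else -1)
      = (if j = i₀ then (Fintype.card K : k) * C j else 0) - C j := by
    intro j; split <;> ring
  simp_rw [hsplit]
  rw [Finset.sum_sub_distrib, Finset.sum_ite_eq' Finset.univ i₀
    (fun j => (Fintype.card K : k) * C j), if_pos (Finset.mem_univ _)]

open IntermediateField in
lemma suppB (hlam : lam ≠ 1) {n : ℕ} (u : Fin n → (Fbar p)ˣ) (hu : Function.Injective u)
    (C : Fin n → k) (i₀ : Fin n) (hC : C i₀ ≠ 0) :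
    {y : Fbar p | ∑ j, C j * lamExt p k lam (y + (u j : Fbar p)) ≠ 0}.Infinite := by
  by_contra hfin
  rw [Set.not_infinite] at hfin
  obtain ⟨w, hw1⟩ : ∃ w : (Fbar p)ˣ, lam w ≠ 1 := by
    by_contra h
    push_neg at h
    exact hlam (MonoidHom.ext fun x => by rw [h]; rfl)
  have hw1' : lamExt p k lam (w : Fbar p) ≠ 1 := by
    rw [lamExt_coe_units]
    exact fun h => hw1 (Units.ext h)
  set g : Fbar p → k := fun y => ∑ j, C j * lamExt p k lam (y + (u j : Fbar p)) with hg
  set A : Set (Fbar p) :=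
    {y | g y ≠ 0} ∪ Set.range (fun j => ((u j : Fbar p))) ∪ {(w : Fbar p)} with hA
  have hAfin : A.Finite := (hfin.union (Set.finite_range _)).union (Set.finite_singleton _)
  have compute : ∀ (K : IntermediateField (ZMod p) (Fbar p)) (_ : Fintype K), A ⊆ K →
      (Fintype.card K : k) * C i₀ - ∑ j, C j
        = ∑ z ∈ hfin.toFinset, g z * lamExt p k lam⁻¹ (z + (u i₀ : Fbar p)) := by
    intro K _ hAK
    have hwK : (w : Fbar p) ∈ K := hAK (Or.inr rfl)
    have huK : ∀ j, ((u j : Fbar p)) ∈ K := fun j => hAK (Or.inl (Or.inr ⟨j, rfl⟩))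
    rw [← key_sum p k lam u hu C i₀ K w hwK w.ne_zero hw1' huK]
    have hcond : ∀ x ∈ (Finset.univ : Finset K),
        (∑ j, C j * lamExt p k lam ((x : Fbar p) + (u j : Fbar p)))
          * lamExt p k lam⁻¹ ((x : Fbar p) + (u i₀ : Fbar p)) ≠ 0 →
        g (x : Fbar p) ≠ 0 := by
      intro x _ h
      intro h0
      apply h
      rw [hg] at h0
      simp only at h0
      rw [h0, zero_mul]
    rw [← Finset.sum_filter_of_ne hcond]
    refine Finset.sum_bij (fun x _ => (x : Fbar p)) ?_ ?_ ?_ ?_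
    · intro x hx
      rw [Set.Finite.mem_toFinset]
      exact (Finset.mem_filter.1 hx).2
    · intro a _ b _ h
      exact Subtype.ext h
    · intro z hz
      rw [Set.Finite.mem_toFinset] at hz
      have hzK : z ∈ K := hAK (Or.inl (Or.inl hz))
      refine ⟨⟨z, hzK⟩, ?_, rfl⟩
      rw [Finset.mem_filter]
      exact ⟨Finset.mem_univ _, hz⟩
    · intro x _
      rfl
  -- two finite subfields of different cardinalities
  set K : IntermediateField (ZMod p) (Fbar p) := adjoin (ZMod p) A with hK
  have hKfd : FiniteDimensional (ZMod p) K := by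
    have := hAfin.to_subtype
    exact finiteDimensional_adjoin (fun x _ => Algebra.IsIntegral.isIntegral x)
  have hKfin : Finite K := Module.finite_of_finite (ZMod p)
  have hKfint : Fintype K := Fintype.ofFinite K
  have hKsetfin : (K : Set (Fbar p)).Finite := K.carrier.toFinite
  obtain ⟨t, ht⟩ := hKsetfin.infinite_compl.nonempty
  set K' : IntermediateField (ZMod p) (Fbar p) := adjoin (ZMod p) (A ∪ {t}) with hK'
  have hK'fd : FiniteDimensional (ZMod p) K' := by
    have := (hAfin.union (Set.finite_singleton t)).to_subtype
    exact finiteDimensional_adjoin (fun x _ => Algebra.IsIntegral.isIntegral x)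
  have hK'fin : Finite K' := Module.finite_of_finite (ZMod p)
  have hK'fint : Fintype K' := Fintype.ofFinite K'
  have hle : K ≤ K' := adjoin.mono _ _ _ Set.subset_union_left
  have htK' : t ∈ K' := subset_adjoin _ _ (Or.inr rfl)
  have hcard : Fintype.card K < Fintype.card K' := by
    refine Fintype.card_lt_of_injective_of_notMem (inclusion hle)
      ((inclusion hle).toRingHom.injective) (b := ⟨t, htK'⟩) ?_
    rintro ⟨a, ha⟩
    have ha' : (a : Fbar p) = t := congrArg Subtype.val ha
    exact ht (ha' ▸ a.2)
  have h1 := compute K hKfint (subset_adjoin _ _)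
  have h2 := compute K' hK'fint (Set.subset_union_left.trans (subset_adjoin _ _))
  rw [← h2] at h1
  have heq : (Fintype.card K : k) = (Fintype.card K' : k) := by
    have h3 : ((Fintype.card K : k) - (Fintype.card K' : k)) * C i₀ = 0 := by
      linear_combination h1
    rcases mul_eq_zero.1 h3 with h | h
    · exact sub_eq_zero.1 h
    · exact absurd h hC
  exact absurd (Nat.cast_injective heq) (Nat.ne_of_lt hcard)

def rowExt {m : ℕ} (x' : Fin m → (Fbar p)ˣ) (y : Fbar p) : Fin (m + 1) → Fbar p :=
  Fin.snoc (fun i => (x' i : Fbar p)) y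

lemma step (hlam : lam ≠ 1) (m : ℕ) (u : Fin (m + 1) → (Fbar p)ˣ)
    (huinj : Function.Injective u) (Ω : Finset (Fbar p)) (x' : Fin m → (Fbar p)ˣ)
    (hx'det : (Matrix.of fun i j : Fin m =>
        lamExt p k lam ((x' i : Fbar p) + (u (Fin.castSucc j) : Fbar p))).det ≠ 0) :
    {y : Fbar p | y ∉ Ω ∧ y ≠ 0 ∧ (∀ j, y + (u j : Fbar p) ≠ 0) ∧
      (Matrix.of fun i j : Fin (m + 1) =>
        lamExt p k lam (rowExt p x' y i + (u j : Fbar p))).det ≠ 0}.Infinite := by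
  set C : Fin (m + 1) → k := fun j => (-1 : k) ^ (m + (j : ℕ)) *
    (Matrix.of fun i' j' : Fin m =>
      lamExt p k lam ((x' i' : Fbar p) + (u (j.succAbove j') : Fbar p))).det with hCdef
  have hexp : ∀ y : Fbar p,
      (Matrix.of fun i j : Fin (m + 1) =>
        lamExt p k lam (rowExt p x' y i + (u j : Fbar p))).det
      = ∑ j, C j * lamExt p k lam (y + (u j : Fbar p)) := by
    intro y
    rw [Matrix.det_succ_row _ (Fin.last m)]
    refine Finset.sum_congr rfl (fun j _ => ?_)
    have h2 : (Matrix.of fun i j : Fin (m + 1) =>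
        lamExt p k lam (rowExt p x' y i + (u j : Fbar p))).submatrix
          (Fin.last m).succAbove j.succAbove
        = Matrix.of fun i' j' : Fin m =>
            lamExt p k lam ((x' i' : Fbar p) + (u (j.succAbove j') : Fbar p)) := by
      ext i' j'
      simp [Matrix.submatrix_apply, rowExt, Fin.succAbove_last, Fin.snoc_castSucc]
    rw [h2]
    have h1 : rowExt p x' y (Fin.last m) = y := by simp [rowExt]
    simp only [Matrix.of_apply, h1, hCdef, Fin.val_last]
    ring
  have hClast : C (Fin.last m) ≠ 0 := by
    rw [hCdef]
    apply mul_ne_zero (pow_ne_zero _ (by norm_num))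
    convert hx'det using 3 with i' j'
    rw [Fin.succAbove_last]
  have hT := suppB p k lam hlam u huinj C (Fin.last m) hClast
  have hbad : ((Ω : Set (Fbar p)) ∪ {0} ∪
      Set.range (fun j => -((u j : Fbar p)))).Finite :=
    ((Ω.finite_toSet.union (Set.finite_singleton _)).union (Set.finite_range _))
  refine ((hT.diff hbad).mono ?_)
  rintro y ⟨hy1, hy2⟩
  simp only [Set.mem_union, Set.mem_singleton_iff, Set.mem_range, not_or, not_exists,
    Finset.mem_coe] at hy2
  obtain ⟨⟨hyΩ, hy0⟩, hyneg⟩ := hy2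
  refine ⟨hyΩ, hy0, ?_, ?_⟩
  · intro j h
    exact hyneg j (eq_neg_of_add_eq_zero_left h).symm
  · rw [hexp y]
    exact hy1

lemma exi (hlam : lam ≠ 1) : ∀ (m : ℕ) (u : Fin m → (Fbar p)ˣ), Function.Injective u →
    ∀ Ω : Finset (Fbar p), ∃ x : Fin m → (Fbar p)ˣ,
      (∀ i, (x i : Fbar p) ∉ Ω) ∧ (∀ i j, (x i : Fbar p) + (u j : Fbar p) ≠ 0) ∧
      (Matrix.of fun i j : Fin m =>
        lamExt p k lam ((x i : Fbar p) + (u j : Fbar p))).det ≠ 0 := by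
  intro m
  induction m with
  | zero =>
    intro u _ Ω
    exact ⟨fun i => i.elim0, fun i => i.elim0, fun i => i.elim0, by simp⟩
  | succ m ih =>
    intro u huinj Ω
    obtain ⟨x', hx'Ω, hx'u, hx'det⟩ := ih (u ∘ Fin.castSucc)
      (huinj.comp (Fin.castSucc_injective m))
      (Ω ∪ Finset.image (fun j => -((u j : Fbar p))) Finset.univ)
    have hstep := step p k lam hlam m u huinj Ω x' hx'det
    obtain ⟨y, hyΩ, hy0, hyu, hydet⟩ := hstep.nonempty
    refine ⟨Fin.snoc x' (Units.mk0 y hy0), ?_, ?_, ?_⟩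
    · refine Fin.lastCases ?_ ?_
      · simpa using hyΩ
      · intro i
        simp only [Fin.snoc_castSucc]
        intro h
        exact hx'Ω i (Finset.mem_union_left _ h)
    · refine Fin.lastCases ?_ ?_
      · intro j
        simpa using hyu j
      · intro i j
        simp only [Fin.snoc_castSucc]
        intro h
        refine hx'Ω i (Finset.mem_union_right _ ?_)
        rw [Finset.mem_image]
        exact ⟨j, Finset.mem_univ _, ((eq_neg_of_add_eq_zero_left h).symm ▸ rfl)⟩
    · have hkey : ∀ i : Fin (m + 1),
          (((Fin.snoc x' (Units.mk0 y hy0) : Fin (m+1) → (Fbar p)ˣ) i : (Fbar p)ˣ) : Fbar p) = rowExt p x' y i := by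
        refine Fin.lastCases ?_ ?_ <;> simp [rowExt]
      have : (Matrix.of fun i j : Fin (m + 1) =>
          lamExt p k lam (((Fin.snoc x' (Units.mk0 y hy0) : Fin (m+1) → (Fbar p)ˣ) i : Fbar p) + (u j : Fbar p)))
          = Matrix.of fun i j : Fin (m + 1) =>
            lamExt p k lam (rowExt p x' y i + (u j : Fbar p)) := by
        ext i j
        rw [Matrix.of_apply, Matrix.of_apply, hkey i]
      rw [this]
      exact hydet

end Aux3

/-- For a nontrivial homomorphism `λ : Fˣ → kˣ`, `n ≥ 1` and pairwise distinct
`u₁, …, u_n ∈ Fˣ`, there are infinitely many `x ∈ (Fˣ)ⁿ` such that all `xᵢ + uⱼ ≠ 0` and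
`det (λ(xᵢ + uⱼ))_{i,j} ≠ 0`. -/
theorem statement3 (lam : (Fbar p)ˣ →* kˣ) (hlam : lam ≠ 1) (n : ℕ) (hn : 1 ≤ n)
    (u : Fin n → (Fbar p)ˣ) (hu : Function.Injective u) :
    {x : Fin n → (Fbar p)ˣ |
      (∀ i j, (x i : Fbar p) + (u j : Fbar p) ≠ 0) ∧
      (Matrix.of fun i j : Fin n =>
        lamExt p k lam ((x i : Fbar p) + (u j : Fbar p))).det ≠ 0}.Infinite := by
  obtain ⟨m, rfl⟩ : ∃ m, n = m + 1 := ⟨n - 1, (Nat.succ_pred_eq_of_pos hn).symm⟩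
  obtain ⟨x', hx'Ω, hx'u, hx'det⟩ := exi p k lam hlam m (u ∘ Fin.castSucc)
    (hu.comp (Fin.castSucc_injective m))
    (Finset.image (fun j => -((u j : Fbar p))) Finset.univ)
  have hstep := step p k lam hlam m u hu ∅ x' hx'det
  set f : Fbar p → (Fin (m + 1) → (Fbar p)ˣ) :=
    fun y => Fin.snoc x' (if h : y = 0 then 1 else Units.mk0 y h) with hf
  have hinjOn : Set.InjOn f {y : Fbar p | y ∉ (∅ : Finset (Fbar p)) ∧ y ≠ 0 ∧
      (∀ j, y + (u j : Fbar p) ≠ 0) ∧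
      (Matrix.of fun i j : Fin (m + 1) =>
        lamExt p k lam (rowExt p x' y i + (u j : Fbar p))).det ≠ 0} := by
    rintro y ⟨-, hy0, -, -⟩ y' ⟨-, hy'0, -, -⟩ heq
    have := congrFun heq (Fin.last m)
    simp only [hf, Fin.snoc_last, dif_neg hy0, dif_neg hy'0] at this
    exact congrArg Units.val this
  have himg := hstep.image hinjOn
  refine himg.mono ?_
  rintro _ ⟨y, ⟨-, hy0, hyu, hydet⟩, rfl⟩
  have hfkey : ∀ i : Fin (m + 1), ((f y i : (Fbar p)ˣ) : Fbar p) = rowExt p x' y i := by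
    refine Fin.lastCases ?_ ?_
    · simp [hf, rowExt, dif_neg hy0]
    · intro i
      simp [hf, rowExt]
  constructor
  · refine Fin.lastCases ?_ ?_
    · intro j
      rw [hfkey (Fin.last m)]
      simpa [rowExt] using hyu j
    · intro i j
      rw [hfkey (Fin.castSucc i)]
      simp only [rowExt, Fin.snoc_castSucc]
      intro h
      refine hx'Ω i ?_
      rw [Finset.mem_image]
      exact ⟨j, Finset.mem_univ _, ((eq_neg_of_add_eq_zero_left h).symm ▸ rfl)⟩
  · have hmat : (Matrix.of fun i j : Fin (m + 1) =>
        lamExt p k lam ((f y i : Fbar p) + (u j : Fbar p)))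
        = Matrix.of fun i j : Fin (m + 1) =>
          lamExt p k lam (rowExt p x' y i + (u j : Fbar p)) := by
      ext i j
      rw [Matrix.of_apply, Matrix.of_apply, hfkey i]
    rw [hmat]
    exact hydet


end
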